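/- In the Jane–Julie model M₂: ButFor(M₂, (B = 0)) = {J₂, B} and HP(M₂, (B = 0)) = {J₂, B}; in particular J₁ ∉ HP(M₂, (B = 0)). -/

import Mathlib

namespace HPFramework

open Classical

/-- A causal model in the Halpern–Pearl framework, over exogenous variables `U`,
endogenous variables `V` and value domain `D`.  It packages the causal structure
(the finite ranges of the variables), the DAG (the well-founded `parent` relation),
the structural equations `F` (each depending only on the exogenous variables and the
parents, and taking values in the range), and the context `ctx`. -/
structure CausalModel (U V D : Type) [Fintype U] [Fintype V] where
  rangeU : U → Finset D
  range : V → Finset D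
  rangeU_nonempty : ∀ W, (rangeU W).Nonempty
  range_nonempty : ∀ X, (range X).Nonempty
  parent : V → V → Prop
  acyclic : WellFounded parent
  F : V → (U → D) → (V → D) → D
  F_parents : ∀ X u (a b : V → D), (∀ Y, parent Y X → a Y = b Y) → F X u a = F X u b
  F_range : ∀ X u v, (∀ W, u W ∈ rangeU W) → (∀ Y, v Y ∈ range Y) → F X u v ∈ range X
  ctx : U → D
  ctx_range : ∀ W, ctx W ∈ rangeU W

variable {U V D : Type} [Fintype U] [Fintype V]

/-- The unique solution `S_M` of the system of structural equations of `M`. -/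
noncomputable def sol (M : CausalModel U V D) : V → D :=
  WellFounded.fix M.acyclic fun X ih =>
    M.F X M.ctx fun Y => if h : M.parent Y X then ih Y h else (M.range_nonempty Y).choose

/-- A partial, range-permitted assignment of values to the endogenous variables of `M`. -/
def PAssign (M : CausalModel U V D) : Type :=
  {g : V → Option D // ∀ X d, g X = some d → d ∈ M.range X}

/-- The intervened model `M_[X⃗ ← x⃗]`: the equation of each variable assigned a value
by `g` is replaced by the corresponding constant; other equations are unchanged. -/
noncomputable def intervene (M : CausalModel U V D) (g : PAssign M) : CausalModel U V D where
  rangeU := M.rangeU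
  range := M.range
  rangeU_nonempty := M.rangeU_nonempty
  range_nonempty := M.range_nonempty
  parent := M.parent
  acyclic := M.acyclic
  F := fun X u v => (g.1 X).getD (M.F X u v)
  F_parents := by
    intro X u a b hab
    cases h : g.1 X with
    | none => simp only [h, Option.getD_none]; exact M.F_parents X u a b hab
    | some d => simp [h]
  F_range := by
    intro X u v hu hv
    cases h : g.1 X with
    | none => simpa [h] using M.F_range X u v hu hv
    | some d => simpa [h] using g.2 X d h
  ctx := M.ctx
  ctx_range := M.ctx_range

/-- Basic formulas: Boolean combinations of atoms `(X = x)` with `X` endogenous. -/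
inductive BForm (V D : Type) : Type where
  | atom : V → D → BForm V D
  | not : BForm V D → BForm V D
  | and : BForm V D → BForm V D → BForm V D

/-- Evaluation of a basic formula at an assignment of values to the endogenous variables. -/
def BForm.eval (s : V → D) : BForm V D → Prop
  | .atom X x => s X = x
  | .not φ => ¬ φ.eval s
  | .and φ ψ => φ.eval s ∧ ψ.eval s

/-- `M ⊨ φ` for a basic formula `φ`, evaluated via the solution `S_M`. -/
def Sat (M : CausalModel U V D) (φ : BForm V D) : Prop := (BForm.eval (sol M)) φ

variable [DecidableEq V]

/-- The single intervention `[X ← x]` (with `x` in the range of `X`). -/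
noncomputable def single (M : CausalModel U V D) (X : V) (x : D)
    (hx : x ∈ M.range X) : PAssign M :=
  ⟨fun Y => if Y = X then some x else none, by
    intro Y d h
    simp only at h
    split at h
    next heq => cases h; exact heq ▸ hx
    next => cases h⟩

/-- The but-for theory: `X ∈ ButFor(M,φ)` iff `M ⊨ φ` and there is `x ∈ R(X)` with
`M ⊨ [X ← x] ¬φ`. -/
noncomputable def ButFor (M : CausalModel U V D) (φ : BForm V D) : Set V :=
  {X | Sat M φ ∧ ∃ x, ∃ hx : x ∈ M.range X, ¬ Sat (intervene M (single M X x hx)) φ}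

/-- `ℳ(A)` (relative to `M`): all models obtained from `M` by a (possibly partial)
range-permitted assignment to the variables in `A`, while any assigned variable outside
`A` is held fixed at its actual value in `M`. -/
def MSet (M : CausalModel U V D) (A : Set V) : Set (CausalModel U V D) :=
  {M' | ∃ g : PAssign M,
    (∀ X, X ∉ A → ∀ d, g.1 X = some d → d = sol M X) ∧ M' = intervene M g}

/-- A causal theory: a map assigning to every model and basic formula a set of
endogenous variables (the causes). -/
def CausalTheory (U V D : Type) [Fintype U] [Fintype V] : Type _ :=
  CausalModel U V D → BForm V D → Set V

/-- `X` is a putative cause of `φ` in `M` (w.r.t. the theory `C`). -/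
noncomputable def Putative (C : CausalTheory U V D) (M : CausalModel U V D)
    (φ : BForm V D) (X : V) : Prop :=
  ∃ M' ∈ MSet M (C M φ), sol M X = sol M' X ∧ X ∈ ButFor M' φ

/-- `X` is a preempted cause of `φ` in `M` (w.r.t. `C`): putative but not a cause. -/
noncomputable def Preempted (C : CausalTheory U V D) (M : CausalModel U V D)
    (φ : BForm V D) (X : V) : Prop :=
  Putative C M φ X ∧ X ∉ C M φ

/-- A theory is similarity-based if it recognises at least all but-for causes and at
most all putative causes. -/
noncomputable def SimilarityBased (C : CausalTheory U V D) : Prop :=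
  ∀ M φ, ButFor M φ ⊆ C M φ ∧ ∀ X ∈ C M φ, Putative C M φ X

/-- The principle of presumption. -/
noncomputable def Presumption (C : CausalTheory U V D) : Prop :=
  ∀ M φ X, Preempted C M φ X →
    ∀ M' ∈ MSet M (C M φ), sol M' X = sol M X → X ∈ ButFor M' φ →
      ∃ W, W ∉ C M φ ∧ sol M W ≠ sol M' W

/-- Empirical causal theories (fixed-point characterisation). -/
noncomputable def Empirical (C : CausalTheory U V D) : Prop :=
  ∀ M φ X, X ∈ C M φ ↔
    ∃ M' ∈ MSet M (C M φ), sol M X = sol M' X ∧ X ∈ ButFor M' φ ∧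
      ∀ W, W ∉ C M φ → sol M W = sol M' W

/-- The relation `M₁ ⊑_{C,φ} M₂`. -/
noncomputable def CRel (C : CausalTheory U V D) (φ : BForm V D)
    (M₁ M₂ : CausalModel U V D) : Prop :=
  M₂ ∈ MSet M₁ (C M₁ φ) ∧ Sat M₂ φ ∧ ∀ X, X ∉ C M₁ φ → sol M₁ X = sol M₂ X

/-- The closure property. -/
noncomputable def Closure (C : CausalTheory U V D) : Prop :=
  ∀ (M : CausalModel U V D) (φ : BForm V D) M', CRel C φ M M' → C M' φ ⊆ C M φ

/-- AC1 and AC2 of Halpern's (2015) definition, for the set `Xs`: `M ⊨ φ` and there is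
an intervention assigning (range-permitted) values to all of `Xs` and holding any other
assigned variable fixed at its actual value, after which `¬φ` holds. -/
noncomputable def AC12 (M : CausalModel U V D) (φ : BForm V D) (Xs : Set V) : Prop :=
  Sat M φ ∧ ∃ g : PAssign M,
    (∀ X ∈ Xs, (g.1 X).isSome) ∧
    (∀ X, X ∉ Xs → ∀ d, g.1 X = some d → d = sol M X) ∧
    ¬ Sat (intervene M g) φ

/-- `Xs` is a complex cause of `φ` in `M`: AC1, AC2 and the minimality condition AC3. -/
noncomputable def ComplexCause (M : CausalModel U V D) (φ : BForm V D) (Xs : Set V) : Prop :=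
  AC12 M φ Xs ∧ ∀ Ys : Set V, Ys ⊂ Xs → ¬ AC12 M φ Ys

/-- The HP theory: `X ∈ HP(M,φ)` iff `X` belongs to some complex cause of `φ` in `M`. -/
noncomputable def HP : CausalTheory U V D := fun M φ =>
  {X | ∃ Xs : Set V, X ∈ Xs ∧ ComplexCause M φ Xs}

/-- Helper: a relation admitting a strictly monotone rank function is well-founded. -/
theorem wf_of_rank {α : Type} (r : α → α → Prop) (rk : α → ℕ)
    (h : ∀ a b, r a b → rk a < rk b) : WellFounded r :=
  Subrelation.wf (fun {a b} hr => h a b hr) (InvImage.wf rk Nat.lt_wfRel.wf)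



/-- The endogenous variables of the Jane–Julie models. -/
inductive JVar : Type
  | J1 | J2 | B
deriving DecidableEq

instance : Fintype JVar :=
  ⟨{JVar.J1, JVar.J2, JVar.B}, by intro x; cases x <;> simp⟩

open JVar

/-- The Jane–Julie model `M₂`: ranges `R(U₁) = R(J₁) = {0, 1/2}`,
`R(U₂) = R(J₂) = {0, 1/2, 1}`, `R(B) = {0, 1}`; equations `J₁ = U₁`, `J₂ = U₂`,
`B = 0` if `J₁ + J₂ ≥ 1` and `B = 1` otherwise; context `u = (1/2, 1)`. -/
noncomputable def M2 : CausalModel (Fin 2) JVar ℚ where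
  rangeU := fun i => if i = 0 then {0, 1/2} else {0, 1/2, 1}
  range := fun X => match X with
    | J1 => {0, 1/2}
    | J2 => {0, 1/2, 1}
    | B => {0, 1}
  rangeU_nonempty := by intro W; split <;> exact ⟨0, by simp⟩
  range_nonempty := by intro X; cases X <;> exact ⟨0, by simp⟩
  parent := fun Y X => (Y = J1 ∨ Y = J2) ∧ X = B
  acyclic := wf_of_rank _ (fun X => match X with | B => 1 | _ => 0)
    (by rintro a b ⟨h1, rfl⟩; rcases h1 with rfl | rfl <;> simp)
  F := fun X u v => match X with
    | J1 => u 0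
    | J2 => u 1
    | B => if 1 ≤ v J1 + v J2 then 0 else 1
  F_parents := by
    intro X u a b hab
    cases X with
    | J1 => rfl
    | J2 => rfl
    | B =>
      show (if 1 ≤ a J1 + a J2 then (0 : ℚ) else 1) = (if 1 ≤ b J1 + b J2 then (0 : ℚ) else 1)
      rw [hab J1 ⟨Or.inl rfl, rfl⟩, hab J2 ⟨Or.inr rfl, rfl⟩]
  F_range := by
    intro X u v hu hv
    cases X with
    | J1 => simpa using hu 0
    | J2 => simpa using hu 1
    | B =>
      show (if 1 ≤ v J1 + v J2 then (0 : ℚ) else 1) ∈ ({0, 1} : Finset ℚ)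
      split <;> simp
  ctx := fun i => if i = 0 then 1/2 else 1
  ctx_range := by intro W; fin_cases W <;> simp

/-- The basic formula `(B = 0)`. -/
noncomputable def φB : BForm JVar ℚ := .atom B 0


/- ------- auxiliary lemmas ------- -/

lemma sol_fix (M : CausalModel U V D) (X : V) :
    sol M X = M.F X M.ctx (sol M) := by
  rw [sol, WellFounded.fix_eq]
  exact M.F_parents X M.ctx _ _ (fun Y hY => dif_pos hY)

lemma sol_unique (M : CausalModel U V D) (v : V → D)
    (h : ∀ X, v X = M.F X M.ctx v) : ∀ X, sol M X = v X := by
  intro X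
  induction X using M.acyclic.induction with
  | _ X ih =>
    rw [sol_fix, h X]
    exact M.F_parents X M.ctx _ _ (fun Y hY => ih Y hY)

lemma solM2 : ∀ X, sol M2 X = (fun X => match X with
    | J1 => (1:ℚ)/2 | J2 => 1 | B => 0) X := by
  apply sol_unique
  intro X
  cases X <;> simp [M2] <;> norm_num

/-- candidate solution of an intervened `M2`. -/
noncomputable def vg (g : PAssign M2) : JVar → ℚ := fun X => match X with
  | J1 => (g.1 J1).getD (1/2)
  | J2 => (g.1 J2).getD 1
  | B => (g.1 B).getD (if 1 ≤ (g.1 J1).getD (1/2) + (g.1 J2).getD 1 then 0 else 1)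

lemma sol_intervene (g : PAssign M2) : ∀ X, sol (intervene M2 g) X = vg g X := by
  apply sol_unique
  intro X
  cases X <;> simp [intervene, M2, vg] <;> norm_num

lemma satM2 : Sat M2 φB := by
  show sol M2 B = 0
  rw [solM2]

lemma rangeJ1 {x : ℚ} (hx : x ∈ M2.range J1) : x = 0 ∨ x = 1/2 := by
  simpa [M2] using hx

lemma sat_intervene_iff (g : PAssign M2) :
    Sat (intervene M2 g) φB ↔ vg g B = 0 := by
  show sol (intervene M2 g) B = 0 ↔ _
  rw [sol_intervene]

lemma rangeJ1_nonneg {x : ℚ} (hx : x ∈ M2.range J1) : 0 ≤ x := by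
  rcases rangeJ1 hx with rfl | rfl <;> norm_num

/-- Any intervention that assigns `J1` (to a range value) and fixes `J2` and `B`
at their actual values (if assigned at all) leaves `B = 0`. -/
lemma fixed_J2B (g : PAssign M2)
    (h2 : ∀ d, g.1 J2 = some d → d = sol M2 J2)
    (hB : ∀ d, g.1 B = some d → d = sol M2 B) :
    Sat (intervene M2 g) φB := by
  rw [sat_intervene_iff]
  have hJ2 : (g.1 J2).getD 1 = 1 := by
    cases h : g.1 J2 with
    | none => rfl
    | some d => have := h2 d h; rw [solM2] at this; simp [this]
  have hJ1 : (0:ℚ) ≤ (g.1 J1).getD (1/2) := by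
    cases h : g.1 J1 with
    | none => norm_num
    | some d => simpa using rangeJ1_nonneg (g.2 J1 d h)
  have hcond : (1:ℚ) ≤ (g.1 J1).getD (1/2) + (g.1 J2).getD 1 := by
    rw [hJ2]; linarith
  cases h : g.1 B with
  | none => simp only [vg, h, Option.getD_none]; rw [if_pos hcond]
  | some d =>
    have := hB d h; rw [solM2] at this
    simp [vg, h, this]

lemma notAC12_empty : ¬ AC12 M2 φB (∅ : Set JVar) := by
  rintro ⟨-, g, -, hfix, hns⟩
  exact hns (fixed_J2B g (fun d h => hfix J2 (by simp) d h)
    (fun d h => hfix B (by simp) d h))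

lemma notAC12_J1 : ¬ AC12 M2 φB ({J1} : Set JVar) := by
  rintro ⟨-, g, -, hfix, hns⟩
  exact hns (fixed_J2B g (fun d h => hfix J2 (by simp) d h)
    (fun d h => hfix B (by simp) d h))

lemma hx0 : (0:ℚ) ∈ M2.range J2 := by simp [M2]
lemma hx1 : (1:ℚ) ∈ M2.range B := by simp [M2]

lemma notSat_J2 : ¬ Sat (intervene M2 (single M2 J2 0 hx0)) φB := by
  rw [sat_intervene_iff]
  simp [vg, single]
  norm_num

lemma notSat_B : ¬ Sat (intervene M2 (single M2 B 1 hx1)) φB := by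
  rw [sat_intervene_iff]
  simp [vg, single]

lemma AC12_J2 : AC12 M2 φB ({J2} : Set JVar) := by
  refine ⟨satM2, single M2 J2 0 hx0, ?_, ?_, notSat_J2⟩
  · rintro X rfl; simp [single]
  · rintro X hX d hd
    simp only [single] at hd
    split at hd
    · next h => exact absurd h hX
    · cases hd

lemma AC12_B : AC12 M2 φB ({B} : Set JVar) := by
  refine ⟨satM2, single M2 B 1 hx1, ?_, ?_, notSat_B⟩
  · rintro X rfl; simp [single]
  · rintro X hX d hd
    simp only [single] at hd
    split at hd
    · next h => exact absurd h hX
    · cases hd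

lemma ssubset_singleton {X : JVar} {Ys : Set JVar} (h : Ys ⊂ ({X} : Set JVar)) :
    Ys = ∅ := by
  by_contra hne
  obtain ⟨y, hy⟩ := Set.nonempty_iff_ne_empty.mpr hne
  have hyX : y = X := h.1 hy
  exact h.ne (Set.Subset.antisymm h.1
    (fun z hz => by rw [Set.mem_singleton_iff] at hz; subst hz; exact hyX ▸ hy))

lemma CC_J2 : ComplexCause M2 φB ({J2} : Set JVar) := by
  refine ⟨AC12_J2, fun Ys hYs => ?_⟩
  rw [ssubset_singleton hYs]; exact notAC12_empty

lemma CC_B : ComplexCause M2 φB ({B} : Set JVar) := by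
  refine ⟨AC12_B, fun Ys hYs => ?_⟩
  rw [ssubset_singleton hYs]; exact notAC12_empty

lemma J1_not_HP : J1 ∉ HP M2 φB := by
  rintro ⟨Xs, hJ1, hAC, hmin⟩
  by_cases h2 : J2 ∈ Xs
  · exact hmin {J2} ⟨Set.singleton_subset_iff.mpr h2,
      fun hsub => by simpa using hsub hJ1⟩ AC12_J2
  by_cases hb : B ∈ Xs
  · exact hmin {B} ⟨Set.singleton_subset_iff.mpr hb,
      fun hsub => by simpa using hsub hJ1⟩ AC12_B
  · have : Xs = {J1} := by
      ext X; cases X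
      · simp [hJ1]
      · simp [h2]
      · simp [hb]
    rw [this] at hAC
    exact notAC12_J1 hAC

/-- in the Jane–Julie model `M₂`, `ButFor(M₂,(B=0)) = {J₂, B}` and
`HP(M₂,(B=0)) = {J₂, B}`; in particular `J₁ ∉ HP(M₂,(B=0))`. -/
theorem jane_julie_M2 :
    ButFor M2 φB = ({J2, B} : Set JVar) ∧
    HP M2 φB = ({J2, B} : Set JVar) ∧
    J1 ∉ HP M2 φB := by
  have hBF : ButFor M2 φB = ({J2, B} : Set JVar) := by
    ext X
    cases X with
    | J1 =>
      simp only [Set.mem_insert_iff, Set.mem_singleton_iff]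
      constructor
      · rintro ⟨-, x, hx, hns⟩
        exact absurd (fixed_J2B (single M2 J1 x hx)
          (by rintro d hd; simp [single] at hd)
          (by rintro d hd; simp [single] at hd)) hns
      · intro h; simp at h
    | J2 =>
      simp only [Set.mem_insert_iff, Set.mem_singleton_iff]
      exact iff_of_true ⟨satM2, 0, hx0, notSat_J2⟩ (by simp)
    | B =>
      simp only [Set.mem_insert_iff, Set.mem_singleton_iff]
      exact iff_of_true ⟨satM2, 1, hx1, notSat_B⟩ (by simp)
  have hHP : HP M2 φB = ({J2, B} : Set JVar) := by
    ext X
    cases X with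
    | J1 =>
      simp only [Set.mem_insert_iff, Set.mem_singleton_iff]
      exact iff_of_false J1_not_HP (by intro h; simp at h)
    | J2 =>
      simp only [Set.mem_insert_iff, Set.mem_singleton_iff]
      exact iff_of_true ⟨{J2}, rfl, CC_J2⟩ (by simp)
    | B =>
      simp only [Set.mem_insert_iff, Set.mem_singleton_iff]
      exact iff_of_true ⟨{B}, rfl, CC_B⟩ (by simp)
  exact ⟨hBF, hHP, J1_not_HP⟩

end HPFramework
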